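/- If an antisymmetric bilinear form Π on a real vector space W is weakly non-degenerate, then the induced bilinear form Π^{⊗k} on the k-th symmetric tensor power S^k W is weakly non-degenerate. -/

import Mathlib

open scoped TensorProduct
open PiTensorProduct

/-- The bilinear form `B^{⊗k}` induced on the `k`-th tensor power `⨂[ℝ]^k W` by a bilinear
form `B` on `W`; on simple tensors it is
`B^{⊗k}(v₁⊗⋯⊗v_k, u₁⊗⋯⊗u_k) = B(v₁,u₁)⋯B(v_k,u_k)`. -/
noncomputable def tensorPowForm {W : Type*} [AddCommGroup W] [Module ℝ W] (k : ℕ)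
    (B : W →ₗ[ℝ] W →ₗ[ℝ] ℝ) :
    (⨂[ℝ]^k W) →ₗ[ℝ] (⨂[ℝ]^k W) →ₗ[ℝ] ℝ :=
  LinearMap.compr₂
    (piTensorHomMap.comp (PiTensorProduct.map fun _ : Fin k => B))
    (constantBaseRingEquiv (Fin k) ℝ).toLinearMap

/-- The subspace `S^k W ⊆ ⨂[ℝ]^k W` of fully symmetric `k`-tensors: those fixed by every
permutation of the tensor factors. -/
noncomputable def SymTensor (W : Type*) [AddCommGroup W] [Module ℝ W] (k : ℕ) : Submodule ℝ (⨂[ℝ]^k W) :=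
  ⨅ σ : Equiv.Perm (Fin k),
    LinearMap.eqLocus ((reindex ℝ (fun _ : Fin k => W) σ).toLinearMap) LinearMap.id

section Aux
variable {W : Type*} [AddCommGroup W] [Module ℝ W] {k : ℕ} (B : W →ₗ[ℝ] W →ₗ[ℝ] ℝ)

lemma tensorPowForm_tprod (v u : Fin k → W) :
    tensorPowForm k B (tprod ℝ v) (tprod ℝ u) = ∏ i, B (v i) (u i) := by
  simp [tensorPowForm, LinearMap.compr₂_apply, map_tprod]

lemma tensorPowForm_reindex (σ : Equiv.Perm (Fin k)) (x y : ⨂[ℝ]^k W) :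
    tensorPowForm k B (reindex ℝ (fun _ : Fin k => W) σ x)
      (reindex ℝ (fun _ : Fin k => W) σ y) = tensorPowForm k B x y := by
  induction x using PiTensorProduct.induction_on with
  | smul_tprod r v =>
    induction y using PiTensorProduct.induction_on with
    | smul_tprod s u =>
      simp only [map_smul, LinearMap.smul_apply, LinearMap.map_smul, reindex_tprod,
        tensorPowForm_tprod, smul_eq_mul]
      rw [Equiv.prod_comp σ.symm fun i => B (v i) (u i)]
    | add y1 y2 h1 h2 =>
      simp only [map_add, LinearMap.map_add] at h1 h2 ⊢
      rw [h1, h2]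
  | add x1 x2 h1 h2 =>
    simp only [map_add, LinearMap.add_apply] at h1 h2 ⊢
    rw [h1, h2]

lemma exists_fin_family (y : ⨂[ℝ]^k W) :
    ∃ (n : ℕ) (e : Fin n → W), LinearIndependent ℝ e ∧
      y ∈ Submodule.span ℝ
        (Set.range fun α : Fin k → Fin n => tprod ℝ fun i => e (α i)) := by
  -- first: y is in the span of tprods of vectors from a f.g. submodule
  have h1 : ∃ V : Submodule ℝ W, V.FG ∧
      y ∈ Submodule.span ℝ {z | ∃ v : Fin k → W, (∀ i, v i ∈ V) ∧ tprod ℝ v = z} := by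
    induction y using PiTensorProduct.induction_on with
    | smul_tprod r v =>
      refine ⟨Submodule.span ℝ (Set.range v), Submodule.fg_span (Set.finite_range v), ?_⟩
      exact Submodule.smul_mem _ _ (Submodule.subset_span
        ⟨v, fun i => Submodule.subset_span ⟨i, rfl⟩, rfl⟩)
    | add x1 x2 h1 h2 =>
      obtain ⟨V1, hV1, hy1⟩ := h1
      obtain ⟨V2, hV2, hy2⟩ := h2
      refine ⟨V1 ⊔ V2, Submodule.FG.sup hV1 hV2, Submodule.add_mem _ ?_ ?_⟩
      · refine Submodule.span_mono (fun z hz => ?_) hy1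
        obtain ⟨v, hv, hz'⟩ := hz
        exact ⟨v, fun i => Submodule.mem_sup_left (hv i), hz'⟩
      · refine Submodule.span_mono (fun z hz => ?_) hy2
        obtain ⟨v, hv, hz'⟩ := hz
        exact ⟨v, fun i => Submodule.mem_sup_right (hv i), hz'⟩
  obtain ⟨V, hVfg, hyV⟩ := h1
  have : Module.Finite ℝ V := Module.Finite.iff_fg.mpr hVfg
  set n := Module.finrank ℝ V with hn
  set b : Module.Basis (Fin n) ℝ V := Module.finBasis ℝ V with hb
  refine ⟨n, fun i => (b i : W), ?_, ?_⟩
  · exact b.linearIndependent.map' V.subtype (Submodule.ker_subtype V)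
  · refine Submodule.span_le.mpr ?_ hyV
    rintro z ⟨v, hv, rfl⟩
    have hvi : ∀ i, v i = ∑ j, b.repr ⟨v i, hv i⟩ j • (b j : W) := by
      intro i
      have := b.sum_repr ⟨v i, hv i⟩
      have h2 := congrArg (V.subtype) this
      simpa only [map_sum, map_smul, Submodule.subtype_apply] using h2.symm
    have hexp : tprod ℝ v = ∑ α : Fin k → Fin n,
        (∏ i, b.repr ⟨v i, hv i⟩ (α i)) • tprod ℝ (fun i => (b (α i) : W)) := by
      conv_lhs => rw [show v = (fun i => ∑ j, b.repr ⟨v i, hv i⟩ j • (b j : W)) from funext hvi]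
      rw [MultilinearMap.map_sum (PiTensorProduct.tprod ℝ) (fun i j => b.repr ⟨v i, hv i⟩ j • (b j : W))]
      exact Finset.sum_congr rfl fun α _ => (PiTensorProduct.tprod ℝ).map_smul_univ _ _
    rw [hexp]
    exact Submodule.sum_mem _ fun α _ =>
      Submodule.smul_mem _ _ (Submodule.subset_span ⟨α, rfl⟩)

lemma exists_dual_family (hnd : ∀ y : W, (∀ x : W, B x y = 0) → y = 0)
    {n : ℕ} (e : Fin n → W) (he : LinearIndependent ℝ e) :
    ∃ x : Fin n → W, ∀ i j, B (x i) (e j) = if i = j then 1 else 0 := by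
  set Φ : W →ₗ[ℝ] (Fin n → ℝ) := LinearMap.pi (fun j => B.flip (e j)) with hΦ
  have hsurj : Function.Surjective Φ := by
    rw [← LinearMap.range_eq_top]
    by_contra h
    obtain ⟨f, hf0, hker⟩ := Submodule.exists_dual_map_eq_bot_of_lt_top
      (p := LinearMap.range Φ) (lt_top_iff_ne_top.mpr h) inferInstance
    have hfΦ : ∀ w, f (Φ w) = 0 := by
      intro w
      have hm : f (Φ w) ∈ (LinearMap.range Φ).map f := ⟨Φ w, ⟨w, rfl⟩, rfl⟩
      rw [hker] at hm
      simpa using hm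
    have hrepr : ∀ u : Fin n → ℝ, f u = ∑ j, u j * f (Pi.single j 1) := by
      intro u
      have hu : u = ∑ j, u j • (Pi.single j 1 : Fin n → ℝ) := by
        ext j
        simp [Finset.sum_apply, Pi.single_apply]
      conv_lhs => rw [hu]
      simp [map_sum, smul_eq_mul]
    have hz : (∑ j, f (Pi.single j 1) • e j) = 0 := by
      apply hnd
      intro w
      have h1 := hfΦ w
      rw [hrepr (Φ w)] at h1
      have h2 : ∀ j, Φ w j = B w (e j) := fun j => rfl
      simp only [h2] at h1
      rw [map_sum]
      simpa [mul_comm] using h1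
    have hcoef : ∀ j, f (Pi.single j 1) = 0 := fun j =>
      linearIndependent_iff'.mp he Finset.univ _ hz j (Finset.mem_univ j)
    apply hf0
    apply LinearMap.ext
    intro u
    rw [hrepr u]
    simp [hcoef]
  choose x hx using fun i => hsurj (Pi.single i 1)
  refine ⟨x, fun i j => ?_⟩
  have h3 := congrFun (hx i) j
  have h4 : Φ (x i) j = B (x i) (e j) := rfl
  rw [h4] at h3
  rw [h3, Pi.single_apply]
  simp [eq_comm]

lemma full_nondeg (hnd : ∀ y : W, (∀ x : W, B x y = 0) → y = 0)
    (y : ⨂[ℝ]^k W) (H : ∀ x : ⨂[ℝ]^k W, tensorPowForm k B x y = 0) : y = 0 := by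
  obtain ⟨n, e, he, hy⟩ := exists_fin_family y
  obtain ⟨x, hx⟩ := exists_dual_family B hnd e he
  rw [Submodule.mem_span_range_iff_exists_fun ℝ] at hy
  obtain ⟨c, hc⟩ := hy
  have hcoef : ∀ α : Fin k → Fin n, c α = 0 := by
    intro α
    have h0 := H (tprod ℝ fun i => x (α i))
    rw [← hc, map_sum] at h0
    have h1 : ∀ β : Fin k → Fin n,
        tensorPowForm k B (tprod ℝ fun i => x (α i)) (c β • tprod ℝ fun i => e (β i))
          = c β * (if α = β then 1 else 0) := by
      intro β
      rw [LinearMap.map_smul, smul_eq_mul, tensorPowForm_tprod]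
      congr 1
      simp only [hx]
      by_cases h : α = β
      · subst h; simp
      · rw [if_neg h]
        obtain ⟨i, hi⟩ := Function.ne_iff.mp h
        exact Finset.prod_eq_zero (Finset.mem_univ i) (if_neg hi)
    rw [Finset.sum_congr rfl fun β _ => h1 β] at h0
    simpa using h0
  rw [← hc]
  simp [hcoef]

end Aux

/-- If the antisymmetric bilinear form `B` on `W` is weakly non-degenerate, then the induced
bilinear form `B^{⊗k}` is weakly non-degenerate on the symmetric tensors `S^k W`. -/

theorem stmt_11 {W : Type*} [AddCommGroup W] [Module ℝ W] (k : ℕ)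
    (B : W →ₗ[ℝ] W →ₗ[ℝ] ℝ)
    (hanti : ∀ x y : W, B x y = - B y x)
    (hnd : ∀ y : W, (∀ x : W, B x y = 0) → y = 0) :
    ∀ y ∈ SymTensor W k, (∀ x ∈ SymTensor W k, tensorPowForm k B x y = 0) → y = 0 := by
  intro y hy H
  have hysym : ∀ σ : Equiv.Perm (Fin k), reindex ℝ (fun _ : Fin k => W) σ y = y := by
    intro σ
    exact LinearMap.mem_eqLocus.mp ((Submodule.mem_iInf _).mp hy σ)
  apply full_nondeg B hnd y
  intro x
  have hN : (Nat.factorial k : ℝ) ≠ 0 := Nat.cast_ne_zero.mpr (Nat.factorial_ne_zero k)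
  set xs : ⨂[ℝ]^k W := (Nat.factorial k : ℝ)⁻¹ •
    ∑ σ : Equiv.Perm (Fin k), reindex ℝ (fun _ : Fin k => W) σ x with hxs
  have hmem : xs ∈ SymTensor W k := by
    refine (Submodule.mem_iInf _).mpr fun τ => LinearMap.mem_eqLocus.mpr ?_
    show reindex ℝ (fun _ : Fin k => W) τ xs = xs
    rw [hxs, map_smul, map_sum]
    congr 1
    refine Fintype.sum_equiv (Equiv.mulLeft τ) _ _ fun σ => ?_
    exact reindex_reindex σ τ x
  have h0 := H xs hmem
  rw [hxs, map_smul, LinearMap.smul_apply, map_sum, LinearMap.coe_sum,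
    Finset.sum_apply] at h0
  have hterm : ∀ σ : Equiv.Perm (Fin k),
      tensorPowForm k B (reindex ℝ (fun _ : Fin k => W) σ x) y = tensorPowForm k B x y := by
    intro σ
    conv_lhs => rw [← hysym σ]
    exact tensorPowForm_reindex B σ x y
  rw [Finset.sum_congr rfl fun σ _ => hterm σ, Finset.sum_const, Finset.card_univ,
    Fintype.card_perm, Fintype.card_fin] at h0
  rw [smul_eq_mul, nsmul_eq_mul] at h0
  have := mul_eq_zero.mp h0
  rcases this with h | h
  · exact absurd h (inv_ne_zero hN)
  · rcases mul_eq_zero.mp h with h' | h'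
    · exact absurd h' hN
    · exact h'
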